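/- Let k be a field, n a positive natural number, and A = Mat_{n×n}(k) the algebra of n × n matrices over k. Then every nonzero element Δ ∈ A is well-tempered: the two-sided ideal AΔA equals A, and the augmentation ideal B⁺ of the unital homotope B = Â_Δ is projective both as a left and as a right B-module. -/

import Mathlib

open scoped TensorProduct

noncomputable section

universe u v

/-! ### The homotope of an algebra at an element -/

variable (K : Type v) [CommRing K] (A : Type u) [Ring A] [Algebra K A]

/-- The (non-unital) homotope of a ring `A` at an element `Δ`: the same underlying
additive group, with multiplication `a ∘ b = a * Δ * b`. -/
@[ext]
structure Homotope {A : Type u} [Ring A] (Δ : A) : Type u where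
  /-- the underlying element of `A` -/
  val : A

namespace Homotope

variable {A} (Δ : A)

theorem val_injective : Function.Injective (Homotope.val (Δ := Δ)) := fun a b h => by
  cases a; cases b; cases h; rfl

instance : Zero (Homotope Δ) := ⟨⟨0⟩⟩
instance : Add (Homotope Δ) := ⟨fun x y => ⟨x.val + y.val⟩⟩
instance : Neg (Homotope Δ) := ⟨fun x => ⟨-x.val⟩⟩
instance : Sub (Homotope Δ) := ⟨fun x y => ⟨x.val - y.val⟩⟩
instance : SMul ℕ (Homotope Δ) := ⟨fun n x => ⟨n • x.val⟩⟩
instance : SMul ℤ (Homotope Δ) := ⟨fun n x => ⟨n • x.val⟩⟩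
instance : Mul (Homotope Δ) := ⟨fun x y => ⟨x.val * Δ * y.val⟩⟩
instance : SMul K (Homotope Δ) := ⟨fun k x => ⟨k • x.val⟩⟩

@[simp] theorem zero_val : (0 : Homotope Δ).val = 0 := rfl
@[simp] theorem add_val (x y : Homotope Δ) : (x + y).val = x.val + y.val := rfl
@[simp] theorem neg_val (x : Homotope Δ) : (-x).val = -x.val := rfl
@[simp] theorem sub_val (x y : Homotope Δ) : (x - y).val = x.val - y.val := rfl
@[simp] theorem mul_val (x y : Homotope Δ) : (x * y).val = x.val * Δ * y.val := rfl
@[simp] theorem smul_val (k : K) (x : Homotope Δ) : (k • x).val = k • x.val := rfl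

instance : AddCommGroup (Homotope Δ) :=
  (val_injective Δ).addCommGroup Homotope.val rfl (fun _ _ => rfl) (fun _ => rfl)
    (fun _ _ => rfl) (fun _ _ => rfl) (fun _ _ => rfl)

instance : NonUnitalRing (Homotope Δ) :=
  { (inferInstance : AddCommGroup (Homotope Δ)),
    (inferInstance : Mul (Homotope Δ)) with
    left_distrib := fun x y z => by ext; simp [mul_add]
    right_distrib := fun x y z => by ext; simp [add_mul]
    zero_mul := fun x => by ext; simp
    mul_zero := fun x => by ext; simp
    mul_assoc := fun x y z => by ext; simp [mul_assoc] }

/-- the projection to `A` as an additive map -/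
def valAddHom : Homotope Δ →+ A :=
  { toFun := Homotope.val, map_zero' := rfl, map_add' := fun _ _ => rfl }

instance : Module K (Homotope Δ) :=
  (val_injective Δ).module K (valAddHom Δ) (fun _ _ => rfl)

instance : IsScalarTower K (Homotope Δ) (Homotope Δ) :=
  ⟨fun k x y => by ext; simp [smul_mul_assoc]⟩

instance : SMulCommClass K (Homotope Δ) (Homotope Δ) :=
  ⟨fun k x y => by ext; simp [mul_smul_comm]⟩

end Homotope

/-- The unital homotope of `A` at `Δ`, obtained from the non-unital homotope by
adjoining a unit: `B = K·1 ⊕ A_Δ`. -/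
abbrev UnitalHomotope (Δ : A) : Type _ := Unitization K (Homotope Δ)

namespace UnitalHomotope

variable (Δ : A)

/-- The non-unital algebra map `A_Δ → A`, `a ↦ a·Δ`. -/
def phi1 : Homotope Δ →ₙₐ[K] A :=
  { toFun := fun x => x.val * Δ
    map_smul' := fun k x => smul_mul_assoc k x.val Δ
    map_zero' := zero_mul Δ
    map_add' := fun x y => add_mul x.val y.val Δ
    map_mul' := fun x y => mul_assoc (x.val * Δ) y.val Δ }

/-- The non-unital algebra map `A_Δ → A`, `a ↦ Δ·a`. -/
def phi2 : Homotope Δ →ₙₐ[K] A :=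
  { toFun := fun x => Δ * x.val
    map_smul' := fun k x => mul_smul_comm k Δ x.val
    map_zero' := mul_zero Δ
    map_add' := fun x y => mul_add Δ x.val y.val
    map_mul' := fun x y => by
      show Δ * (x.val * Δ * y.val) = Δ * x.val * (Δ * y.val)
      simp [mul_assoc] }

/-- The algebra homomorphism `ψ₁ : B → A`, determined by `a ↦ a·Δ` on `B⁺ = A`. -/
def psi1 : UnitalHomotope K A Δ →ₐ[K] A := Unitization.lift (phi1 K A Δ)

/-- The algebra homomorphism `ψ₂ : B → A`, determined by `a ↦ Δ·a` on `B⁺ = A`. -/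
def psi2 : UnitalHomotope K A Δ →ₐ[K] A := Unitization.lift (phi2 K A Δ)

/-- The augmentation `B → K` of the unital homotope. -/
def aug : UnitalHomotope K A Δ →ₐ[K] K := Unitization.fstHom K (Homotope Δ)

/-- The augmentation ideal `B⁺ ⊆ B`, as a left ideal (hence a left `B`-module). -/
def plusLeft : Ideal (UnitalHomotope K A Δ) := RingHom.ker (aug K A Δ).toRingHom

/-- The augmentation, as a ring homomorphism on the opposite algebra. -/
def augOp : (UnitalHomotope K A Δ)ᵐᵒᵖ →+* K :=
  RingHom.fromOpposite (aug K A Δ).toRingHom (fun x y => Commute.all _ _)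

/-- The augmentation ideal `B⁺`, as a left ideal of `Bᵐᵒᵖ`, i.e. as a right `B`-module. -/
def plusRight : Ideal (UnitalHomotope K A Δ)ᵐᵒᵖ := RingHom.ker (augOp K A Δ)

end UnitalHomotope

open UnitalHomotope

/-- An element `Δ` of a `K`-algebra `A` is *well-tempered* if the two-sided ideal
generated by `Δ` is all of `A`, and the augmentation ideal `B⁺` of the unital homotope
`B = Â_Δ` is projective both as a left and as a right `B`-module. -/
def WellTempered (Δ : A) : Prop :=
  TwoSidedIdeal.span ({Δ} : Set A) = ⊤ ∧
    Module.Projective (UnitalHomotope K A Δ) (plusLeft K A Δ) ∧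
    Module.Projective (UnitalHomotope K A Δ)ᵐᵒᵖ (plusRight K A Δ)

namespace UnitalHomotope

variable {A} (Δ : A)

/-- `A` as a left module over the unital homotope `B = Â_Δ`, via `ψ₁`. -/
instance instModulePsi1 : Module (UnitalHomotope K A Δ) A :=
  Module.compHom A (psi1 K A Δ).toRingHom

theorem smul_def (b : UnitalHomotope K A Δ) (a : A) : b • a = psi1 K A Δ b * a := rfl

instance : SMulCommClass (UnitalHomotope K A Δ) K A :=
  ⟨fun b k a => mul_smul_comm k (psi1 K A Δ b) a⟩

instance : SMulCommClass K (UnitalHomotope K A Δ) A :=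
  ⟨fun k b a => (mul_smul_comm k (psi1 K A Δ b) a).symm⟩

instance : IsScalarTower K (UnitalHomotope K A Δ) A :=
  ⟨fun k b a => by
    rw [smul_def, smul_def, map_smul, smul_mul_assoc]⟩

end UnitalHomotope

end

open UnitalHomotope Homotope

section Aux

variable {K : Type v} [CommRing K] {A : Type u} [Ring A] [Algebra K A] (Δ : A)

theorem mem_plusLeft_iff (x : UnitalHomotope K A Δ) :
    x ∈ plusLeft K A Δ ↔ x.fst = 0 := by
  rw [plusLeft, RingHom.mem_ker]; rfl

theorem mem_plusRight_iff (x : (UnitalHomotope K A Δ)ᵐᵒᵖ) :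
    x ∈ plusRight K A Δ ↔ (MulOpposite.unop x).fst = 0 := by
  rw [plusRight, RingHom.mem_ker]; rfl

theorem homotope_sum_val {m : ℕ} (f : Fin m → A) :
    (∑ j, (⟨f j⟩ : Homotope Δ)).val = ∑ j, f j :=
  map_sum (Homotope.valAddHom Δ) _ _

local notation "B" => UnitalHomotope K A Δ

theorem projLeft_aux {m : ℕ} (w u : Fin m → A)
    (h : ∑ j, w j * Δ * u j = 1) :
    Module.Projective (UnitalHomotope K A Δ) (plusLeft K A Δ) := by
  let i : plusLeft K A Δ →ₗ[B] (Fin m → B) :=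
    { toFun := fun x j => Unitization.inr ⟨(x : B).snd.val * w j⟩
      map_add' := fun x y => by
        funext j
        refine Unitization.ext (by simp) ?_
        ext
        simp [add_mul]
      map_smul' := fun b x => by
        funext j
        have hx : (x : B).fst = 0 := (mem_plusLeft_iff Δ _).mp x.2
        have h2 : (b * (x : B)).snd.val
            = b.fst • (x : B).snd.val + b.snd.val * Δ * (x : B).snd.val := by
          rw [Unitization.snd_mul, hx]
          simp
        refine Unitization.ext (by simp [Unitization.fst_mul]) ?_
        ext
        simp only [Unitization.snd_mul, Unitization.snd_inr, Unitization.fst_inr,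
          Pi.smul_apply, RingHom.id_apply, smul_eq_mul, SetLike.val_smul, hx,
          zero_smul, add_zero, zero_add, Homotope.add_val, Homotope.smul_val,
          Homotope.mul_val]
        simp [add_mul, smul_mul_assoc, mul_assoc] }
  let p : Fin m → plusLeft K A Δ := fun j =>
    ⟨Unitization.inr ⟨u j⟩,
      (mem_plusLeft_iff Δ _).mpr (Unitization.fst_inr (R := K) (⟨u j⟩ : Homotope Δ))⟩
  let s : (Fin m → B) →ₗ[B] plusLeft K A Δ :=
    { toFun := fun f => ∑ j, f j • p j
      map_add' := fun f g => by
        simp [add_smul, Finset.sum_add_distrib]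
      map_smul' := fun b f => by
        simp [mul_smul, Finset.smul_sum] }
  refine Module.Projective.of_split i s ?_
  refine LinearMap.ext fun x => ?_
  have hx : (x : B).fst = 0 := (mem_plusLeft_iff Δ _).mp x.2
  refine Subtype.ext ?_
  show ((∑ j, (Unitization.inr ⟨(x : B).snd.val * w j⟩ : B) • p j : plusLeft K A Δ) : B)
    = (x : B)
  rw [AddSubmonoidClass.coe_finset_sum]
  have e1 : ∀ j : Fin m,
      (((Unitization.inr ⟨(x : B).snd.val * w j⟩ : B) • p j : plusLeft K A Δ) : B)
        = (Unitization.inr (⟨(x : B).snd.val * (w j * Δ * u j)⟩ : Homotope Δ) : B) := by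
    intro j
    show (Unitization.inr ⟨(x : B).snd.val * w j⟩ : B) * Unitization.inr ⟨u j⟩ = _
    rw [← Unitization.inr_mul]
    congr 1
    ext
    show (x : B).snd.val * w j * Δ * u j = (x : B).snd.val * (w j * Δ * u j)
    simp [mul_assoc]
  rw [Finset.sum_congr rfl fun j _ => e1 j]
  have hsum : ∑ j, (Unitization.inr (⟨(x : B).snd.val * (w j * Δ * u j)⟩ : Homotope Δ) : B)
      = (Unitization.inr (∑ j, (⟨(x : B).snd.val * (w j * Δ * u j)⟩ : Homotope Δ)) : B) :=
    (map_sum (Unitization.inrHom K K (Homotope Δ)) _ _).symm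
  rw [hsum]
  have hval : (∑ j, (⟨(x : B).snd.val * (w j * Δ * u j)⟩ : Homotope Δ))
      = (⟨(x : B).snd.val⟩ : Homotope Δ) := by
    apply Homotope.val_injective
    rw [homotope_sum_val, ← Finset.mul_sum, h, mul_one]
  rw [hval]
  exact Unitization.ext hx.symm rfl

theorem projRight_aux {m : ℕ} (w u : Fin m → A)
    (h : ∑ j, w j * Δ * u j = 1) :
    Module.Projective (UnitalHomotope K A Δ)ᵐᵒᵖ (plusRight K A Δ) := by
  let i : plusRight K A Δ →ₗ[Bᵐᵒᵖ] (Fin m → Bᵐᵒᵖ) :=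
    { toFun := fun x j =>
        MulOpposite.op (Unitization.inr ⟨u j * ((x : Bᵐᵒᵖ).unop).snd.val⟩ : B)
      map_add' := fun x y => by
        funext j
        refine congrArg MulOpposite.op (Unitization.ext (by simp) ?_)
        ext
        simp [mul_add]
      map_smul' := fun b x => by
        funext j
        have hx : ((x : Bᵐᵒᵖ).unop).fst = 0 := (mem_plusRight_iff Δ _).mp x.2
        have h2 : ((b * (x : Bᵐᵒᵖ)).unop).snd.val
            = b.unop.fst • ((x : Bᵐᵒᵖ).unop).snd.val
              + ((x : Bᵐᵒᵖ).unop).snd.val * Δ * b.unop.snd.val := by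
          show ((x : Bᵐᵒᵖ).unop * b.unop).snd.val = _
          rw [Unitization.snd_mul, hx]
          simp
        apply MulOpposite.unop_injective
        refine Unitization.ext (by simp [Unitization.fst_mul, hx]) ?_
        ext
        simp only [Unitization.snd_mul, Unitization.snd_inr, Unitization.fst_inr,
          Pi.smul_apply, RingHom.id_apply, smul_eq_mul, SetLike.val_smul,
          MulOpposite.unop_mul, MulOpposite.unop_op, hx,
          zero_smul, add_zero, zero_add, Homotope.add_val, Homotope.smul_val,
          Homotope.mul_val]
        simp [mul_add, mul_smul_comm, mul_assoc]
      }
  let p : Fin m → plusRight K A Δ := fun j =>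
    ⟨MulOpposite.op (Unitization.inr ⟨w j⟩ : B),
      (mem_plusRight_iff Δ _).mpr (Unitization.fst_inr (R := K) (⟨w j⟩ : Homotope Δ))⟩
  let s : (Fin m → Bᵐᵒᵖ) →ₗ[Bᵐᵒᵖ] plusRight K A Δ :=
    { toFun := fun f => ∑ j, f j • p j
      map_add' := fun f g => by
        simp [add_smul, Finset.sum_add_distrib]
      map_smul' := fun b f => by
        simp [mul_smul, Finset.smul_sum] }
  refine Module.Projective.of_split i s ?_
  refine LinearMap.ext fun x => ?_
  have hx : ((x : Bᵐᵒᵖ).unop).fst = 0 := (mem_plusRight_iff Δ _).mp x.2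
  refine Subtype.ext ?_
  show ((∑ j, (MulOpposite.op (Unitization.inr ⟨u j * ((x : Bᵐᵒᵖ).unop).snd.val⟩ : B)) • p j
      : plusRight K A Δ) : Bᵐᵒᵖ) = (x : Bᵐᵒᵖ)
  rw [AddSubmonoidClass.coe_finset_sum]
  have e1 : ∀ j : Fin m,
      (((MulOpposite.op (Unitization.inr ⟨u j * ((x : Bᵐᵒᵖ).unop).snd.val⟩ : B)) • p j
        : plusRight K A Δ) : Bᵐᵒᵖ)
        = MulOpposite.op
          (Unitization.inr (⟨(w j * Δ * u j) * ((x : Bᵐᵒᵖ).unop).snd.val⟩ : Homotope Δ) : B) := by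
    intro j
    show MulOpposite.op ((Unitization.inr (⟨w j⟩ : Homotope Δ) : B)
        * Unitization.inr ⟨u j * ((x : Bᵐᵒᵖ).unop).snd.val⟩) = _
    rw [← Unitization.inr_mul]
    refine congrArg MulOpposite.op (congrArg _ ?_)
    ext
    show w j * Δ * (u j * ((x : Bᵐᵒᵖ).unop).snd.val)
      = (w j * Δ * u j) * ((x : Bᵐᵒᵖ).unop).snd.val
    simp [mul_assoc]
  rw [Finset.sum_congr rfl fun j _ => e1 j]
  have hsum : ∑ j, MulOpposite.op
        (Unitization.inr (⟨(w j * Δ * u j) * ((x : Bᵐᵒᵖ).unop).snd.val⟩ : Homotope Δ) : B)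
      = MulOpposite.op (Unitization.inr
          (∑ j, (⟨(w j * Δ * u j) * ((x : Bᵐᵒᵖ).unop).snd.val⟩ : Homotope Δ)) : B) :=
    (map_sum (((MulOpposite.opAddEquiv : B ≃+ Bᵐᵒᵖ)).toAddMonoidHom.comp
        (Unitization.inrHom K K (Homotope Δ)).toAddMonoidHom) _ _).symm
  rw [hsum]
  have hval : (∑ j, (⟨(w j * Δ * u j) * ((x : Bᵐᵒᵖ).unop).snd.val⟩ : Homotope Δ))
      = (⟨((x : Bᵐᵒᵖ).unop).snd.val⟩ : Homotope Δ) := by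
    apply Homotope.val_injective
    rw [homotope_sum_val, ← Finset.sum_mul, h, one_mul]
  rw [hval]
  exact congrArg MulOpposite.op (Unitization.ext hx.symm rfl)

end Aux

/-- Every nonzero element of a matrix algebra over a field is
well-tempered. -/
theorem matrix_wellTempered {k : Type u} [Field k] {n : ℕ} (hn : 0 < n)
    (Δ : Matrix (Fin n) (Fin n) k) (hΔ : Δ ≠ 0) :
    WellTempered k (Matrix (Fin n) (Fin n) k) Δ := by
  classical
  obtain ⟨p, q, hpq⟩ : ∃ p q, Δ p q ≠ 0 := by
    by_contra hc
    push_neg at hc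
    exact hΔ (by ext a b; simpa using hc a b)
  set w : Fin n → Matrix (Fin n) (Fin n) k :=
    fun j => (Δ p q)⁻¹ • Matrix.single j p 1 with hw
  set u : Fin n → Matrix (Fin n) (Fin n) k :=
    fun j => Matrix.single q j 1 with hu
  have key : ∑ j, w j * Δ * u j = 1 := by
    have e : ∀ j : Fin n, w j * Δ * u j = Matrix.single j j 1 := by
      intro j
      rw [hw, hu]
      ext a b
      simp [Matrix.mul_apply, Matrix.single, Matrix.one_apply, mul_comm,
        Finset.sum_ite_eq, Finset.sum_ite_eq', ite_and, inv_mul_cancel₀ hpq,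
        mul_inv_cancel₀ hpq]
      by_cases h1 : j = a <;> by_cases h2 : j = b <;> simp [h1, h2]
    rw [Finset.sum_congr rfl fun j _ => e j]
    ext a b
    simp [Matrix.sum_apply, Matrix.single, Matrix.one_apply,
      Finset.sum_ite_eq, Finset.sum_ite_eq', ite_and]
  refine ⟨?_, projLeft_aux Δ w u key, projRight_aux Δ w u key⟩
  refine (TwoSidedIdeal.one_mem_iff _).mp ?_
  rw [← key]
  exact TwoSidedIdeal.finsetSum_mem _ _ _ fun j _ =>
    TwoSidedIdeal.mul_mem_right _ _ _
      (TwoSidedIdeal.mul_mem_left _ _ _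
        (TwoSidedIdeal.subset_span (Set.mem_singleton Δ)))
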